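/- Let f : M → X be a function from an ω₁-saturated structure M (with the σ-topology generated by definable sets) to a Polish locally compact space X. Then f is σ-continuous if and only if for every compact K and open U with K ⊆ U ⊆ X there exists a definable set D with f⁻¹(K) ⊆ D ⊆ f⁻¹(U). -/

import Mathlib

open Set FirstOrder

/-- `M` is ω₁-saturated: every countable, finitely satisfiable family of definable sets
has nonempty intersection. -/
def OmegaOneSaturated (L : Language) (M : Type*) [L.Structure M] : Prop :=
  ∀ D : ℕ → Set M, (∀ n, (Set.univ : Set M).Definable₁ L (D n)) →
    (∀ s : Finset ℕ, (⋂ n ∈ s, D n).Nonempty) → (⋂ n, D n).Nonempty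

section Aux

variable {L : Language} {M : Type*} [L.Structure M]

lemma d1_compl {s : Set M} (h : (Set.univ : Set M).Definable₁ L s) :
    (Set.univ : Set M).Definable₁ L sᶜ := by
  have : {x : Fin 1 → M | x 0 ∈ sᶜ} = {x : Fin 1 → M | x 0 ∈ s}ᶜ := rfl
  unfold Set.Definable₁ at h ⊢
  rw [this]
  exact h.compl

lemma d1_inter {s t : Set M} (hs : (Set.univ : Set M).Definable₁ L s)
    (ht : (Set.univ : Set M).Definable₁ L t) :
    (Set.univ : Set M).Definable₁ L (s ∩ t) := by
  have : {x : Fin 1 → M | x 0 ∈ s ∩ t} =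
      {x : Fin 1 → M | x 0 ∈ s} ∩ {x : Fin 1 → M | x 0 ∈ t} := rfl
  unfold Set.Definable₁ at hs ht ⊢
  rw [this]
  exact hs.inter ht

lemma d1_biUnion {f : ℕ → Set M} (hf : ∀ n, (Set.univ : Set M).Definable₁ L (f n))
    (s : Finset ℕ) : (Set.univ : Set M).Definable₁ L (⋃ n ∈ s, f n) := by
  have : {x : Fin 1 → M | x 0 ∈ ⋃ n ∈ s, f n} =
      ⋃ n ∈ s, {x : Fin 1 → M | x 0 ∈ f n} := by
    ext x; simp
  unfold Set.Definable₁ at hf ⊢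
  rw [this]
  exact Set.definable_biUnion_finset hf s

end Aux

/-- For `f : M → X` with `M` ω₁-saturated and `X` a locally compact Polish space,
σ-continuity of `f` is equivalent to: for every compact `K` and open `U` with `K ⊆ U`
there is a definable set `D` with `f⁻¹(K) ⊆ D ⊆ f⁻¹(U)`. -/
theorem sigmaContinuous_iff_definable_between {L : Language} {M : Type*} [L.Structure M]
    {X : Type*} [TopologicalSpace X] [PolishSpace X] [LocallyCompactSpace X]
    (hsat : OmegaOneSaturated L M) (f : M → X) :
    (∀ U : Set X, IsOpen U →
        ∃ g : ℕ → Set M, (∀ n, (Set.univ : Set M).Definable₁ L (g n)) ∧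
          f ⁻¹' U = ⋃ n, g n) ↔
      (∀ K U : Set X, IsCompact K → IsOpen U → K ⊆ U →
        ∃ D : Set M, (Set.univ : Set M).Definable₁ L D ∧
          f ⁻¹' K ⊆ D ∧ D ⊆ f ⁻¹' U) := by
  constructor
  · -- forward: σ-continuity implies interpolation
    intro hcont K U hK hU hKU
    obtain ⟨g, hg, hgU⟩ := hcont U hU
    obtain ⟨h, hh, hhK⟩ := hcont Kᶜ hK.isClosed.isOpen_compl
    set D : ℕ → Set M := fun n => (g n)ᶜ ∩ (h n)ᶜ with hD
    have hDdef : ∀ n, (Set.univ : Set M).Definable₁ L (D n) :=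
      fun n => d1_inter (d1_compl (hg n)) (d1_compl (hh n))
    have hempty : ¬ (⋂ n, D n).Nonempty := by
      rintro ⟨x, hx⟩
      simp only [Set.mem_iInter, hD, Set.mem_inter_iff, Set.mem_compl_iff] at hx
      by_cases hfx : f x ∈ U
      · have : x ∈ ⋃ n, g n := hgU ▸ hfx
        obtain ⟨n, hn⟩ := Set.mem_iUnion.1 this
        exact (hx n).1 hn
      · have hfK : f x ∈ Kᶜ := fun hmem => hfx (hKU hmem)
        have : x ∈ ⋃ n, h n := hhK ▸ hfK
        obtain ⟨n, hn⟩ := Set.mem_iUnion.1 this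
        exact (hx n).2 hn
    have hfin : ∃ s : Finset ℕ, ¬ (⋂ n ∈ s, D n).Nonempty := by
      by_contra hcon
      push_neg at hcon
      exact hempty (hsat D hDdef hcon)
    obtain ⟨s, hs⟩ := hfin
    refine ⟨(⋃ n ∈ s, h n)ᶜ, d1_compl (d1_biUnion hh s), ?_, ?_⟩
    · intro x hx hxB
      obtain ⟨n, -, hn⟩ := Set.mem_iUnion₂.1 hxB
      have : x ∈ ⋃ m, h m := Set.mem_iUnion.2 ⟨n, hn⟩
      exact (hhK ▸ this : x ∈ f ⁻¹' Kᶜ) hx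
    · intro x hx
      have : x ∉ ⋂ n ∈ s, D n := fun hmem => hs ⟨x, hmem⟩
      simp only [Set.mem_iInter, hD, Set.mem_inter_iff, Set.mem_compl_iff, not_forall,
        not_and_or, not_not] at this
      obtain ⟨n, hns, hgn⟩ := this
      rcases hgn with hgn | hhn
      · have : x ∈ ⋃ m, g m := Set.mem_iUnion.2 ⟨n, hgn⟩
        exact hgU ▸ this
      · exact absurd (Set.mem_iUnion₂.2 ⟨n, hns, hhn⟩) hx
  · -- backward: interpolation implies σ-continuity
    intro hint U hU
    rcases eq_empty_or_nonempty U with rfl | hUne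
    · exact ⟨fun _ => ∅, fun _ => by
        unfold Set.Definable₁; simp,
        by simp⟩
    -- choose compact pieces covering U
    have hx : ∀ x : U, ∃ K : Set X, IsCompact K ∧ (x : X) ∈ interior K ∧ K ⊆ U :=
      fun x => exists_compact_subset hU x.2
    choose K hKc hKi hKU using hx
    obtain ⟨T, hTc, hTU⟩ :=
      TopologicalSpace.isOpen_iUnion_countable (fun x : U => interior (K x))
        (fun _ => isOpen_interior)
    have hTne : T.Nonempty := by
      obtain ⟨x, hxU⟩ := hUne
      have : x ∈ ⋃ i, interior (K i) :=
        Set.mem_iUnion.2 ⟨⟨x, hxU⟩, hKi ⟨x, hxU⟩⟩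
      rw [← hTU] at this
      obtain ⟨i, hi, -⟩ := Set.mem_iUnion₂.1 this
      exact ⟨i, hi⟩
    obtain ⟨e, he⟩ := hTc.exists_eq_range hTne
    have hDn : ∀ n : ℕ, ∃ D : Set M, (Set.univ : Set M).Definable₁ L D ∧
        f ⁻¹' (K (e n)) ⊆ D ∧ D ⊆ f ⁻¹' U :=
      fun n => hint (K (e n)) U (hKc (e n)) hU (hKU (e n))
    choose D hDdef hDK hDU using hDn
    refine ⟨D, hDdef, ?_⟩
    apply Set.Subset.antisymm
    · intro x hxU
      have hmem : f x ∈ ⋃ i, interior (K i) :=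
        Set.mem_iUnion.2 ⟨⟨f x, hxU⟩, hKi _⟩
      rw [← hTU] at hmem
      obtain ⟨i, hiT, hxi⟩ := Set.mem_iUnion₂.1 hmem
      have : i ∈ Set.range e := he ▸ hiT
      obtain ⟨n, rfl⟩ := this
      exact Set.mem_iUnion.2 ⟨n, hDK n (Set.mem_preimage.2 (interior_subset hxi))⟩
    · exact Set.iUnion_subset fun n => hDU n
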